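/- Let α < 0 and let f : ℝ^n → ℝ be a nonnegative α-concave function. Then the α-difference function Δ_α f is also α-concave. -/

import Mathlib

open MeasureTheory Set
open scoped ENNReal

/-- The `α`-mean (for `α < 0`) of two nonnegative reals:
`M_α(a,b;t) = (t a^α + (1−t) b^α)^{1/α}` if `a, b > 0`, and `0` if `a = 0` or `b = 0`. -/
noncomputable def Malpha (α a b t : ℝ) : ℝ :=
  if 0 < a ∧ 0 < b then (t * a ^ α + (1 - t) * b ^ α) ^ (1 / α) else 0

/-- The `α`-mean on `[0,∞]`, extending `M_α` to infinite values
(`∞^α = 0` and `0^α = ∞` for `α < 0` are built into `ENNReal` rpow). -/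
noncomputable def eMalpha (α : ℝ) (a b : ℝ≥0∞) (t : ℝ) : ℝ≥0∞ :=
  (ENNReal.ofReal t * a ^ α + ENNReal.ofReal (1 - t) * b ^ α) ^ (1 / α)

/-- A nonnegative `f : ℝⁿ → ℝ` is `α`-concave if
`f(t x + (1−t) y) ≥ M_α(f(x), f(y); t)` for all `x, y` and `t ∈ [0,1]`. -/
def AlphaConcave (α : ℝ) {n : ℕ} (f : (Fin n → ℝ) → ℝ) : Prop :=
  ∀ x y : Fin n → ℝ, ∀ t : ℝ, t ∈ Set.Icc (0 : ℝ) 1 →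
    Malpha α (f x) (f y) t ≤ f (t • x + (1 - t) • y)

/-- The `α`-difference function of `f`:
`Δ_α f(z) = sup { M_α(f(x), f(−y); 1/2) : (x+y)/2 = z }`, valued in `[0,∞]`. -/
noncomputable def diffAlpha (α : ℝ) {n : ℕ} (f : (Fin n → ℝ) → ℝ)
    (z : Fin n → ℝ) : ℝ≥0∞ :=
  sSup {r : ℝ≥0∞ | ∃ x y : Fin n → ℝ, (1 / 2 : ℝ) • (x + y) = z ∧
    r = ENNReal.ofReal (Malpha α (f x) (f (-y)) (1 / 2))}

lemma erpow_anti {c : ℝ} (hc : c < 0) {x y : ℝ≥0∞} (h : x ≤ y) : y ^ c ≤ x ^ c := by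
  rw [← neg_neg c, ENNReal.rpow_neg y, ENNReal.rpow_neg x]
  exact ENNReal.inv_le_inv.mpr (ENNReal.rpow_le_rpow h (neg_pos.mpr hc).le)

lemma erpow_rpow_inv {c : ℝ} (hc : c ≠ 0) (x : ℝ≥0∞) : (x ^ c) ^ (1 / c) = x := by
  rw [← ENNReal.rpow_mul, mul_one_div_cancel hc, ENNReal.rpow_one]

lemma erpow_rpow_inv' {c : ℝ} (hc : c ≠ 0) (x : ℝ≥0∞) : (x ^ c) ^ c⁻¹ = x := by
  rw [← ENNReal.rpow_mul, mul_inv_cancel₀ hc, ENNReal.rpow_one]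

lemma erpow_inv_rpow {c : ℝ} (hc : c ≠ 0) (x : ℝ≥0∞) : (x ^ (1 / c)) ^ c = x := by
  rw [← ENNReal.rpow_mul, one_div_mul_cancel hc, ENNReal.rpow_one]

lemma rpow_le_iff_neg {c : ℝ} (hc : c < 0) {x y : ℝ≥0∞} : x ^ c ≤ y ↔ y ^ (1 / c) ≤ x := by
  constructor
  · intro h
    have h2 := erpow_anti (one_div_neg.mpr hc) h
    rwa [erpow_rpow_inv hc.ne x] at h2
  · intro h
    have h2 := erpow_anti hc h
    rwa [erpow_inv_rpow hc.ne y] at h2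

lemma le_rpow_iff_neg {c : ℝ} (hc : c < 0) {x y : ℝ≥0∞} : y ≤ x ^ c ↔ x ≤ y ^ (1 / c) := by
  constructor
  · intro h
    have h2 := erpow_anti (one_div_neg.mpr hc) h
    rwa [erpow_rpow_inv hc.ne x] at h2
  · intro h
    have h2 := erpow_anti hc h
    rwa [erpow_inv_rpow hc.ne y] at h2

lemma iInf_rpow_le_neg {c : ℝ} (hc : c < 0) (S : Set ℝ≥0∞) :
    ⨅ a : S, (a : ℝ≥0∞) ^ c ≤ sSup S ^ c := by
  rw [le_rpow_iff_neg hc]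
  refine sSup_le fun s hs => ?_
  rw [le_rpow_iff_neg (one_div_neg.mpr hc), one_div_one_div]
  exact iInf_le _ (⟨s, hs⟩ : S)


lemma eMalpha_sSup_le {α : ℝ} (hα : α < 0) {t : ℝ} {S T : Set ℝ≥0∞} {D : ℝ≥0∞}
    (hS : S.Nonempty) (hT : T.Nonempty)
    (h : ∀ a ∈ S, ∀ b ∈ T, eMalpha α a b t ≤ D) :
    eMalpha α (sSup S) (sSup T) t ≤ D := by
  have hα1 : (1 : ℝ) / α < 0 := one_div_neg.mpr hα
  have hSne : Nonempty S := hS.to_subtype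
  have hTne : Nonempty T := hT.to_subtype
  rw [eMalpha, rpow_le_iff_neg hα1, one_div_one_div]
  calc D ^ α
      ≤ ⨅ a : S, ⨅ b : T,
          (ENNReal.ofReal t * (a : ℝ≥0∞) ^ α + ENNReal.ofReal (1 - t) * (b : ℝ≥0∞) ^ α) := by
        refine le_iInf fun a => le_iInf fun b => ?_
        have h2 := h a a.2 b b.2
        rwa [eMalpha, rpow_le_iff_neg hα1, one_div_one_div] at h2
    _ = (⨅ a : S, ENNReal.ofReal t * (a : ℝ≥0∞) ^ α)
          + ⨅ b : T, ENNReal.ofReal (1 - t) * (b : ℝ≥0∞) ^ α := by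
        rw [ENNReal.iInf_add]
        refine iInf_congr fun a => ?_
        rw [ENNReal.add_iInf]
    _ = ENNReal.ofReal t * (⨅ a : S, (a : ℝ≥0∞) ^ α)
          + ENNReal.ofReal (1 - t) * ⨅ b : T, (b : ℝ≥0∞) ^ α := by
        rw [ENNReal.mul_iInf (fun h' => absurd h' ENNReal.ofReal_ne_top),
          ENNReal.mul_iInf (fun h' => absurd h' ENNReal.ofReal_ne_top)]
    _ ≤ ENNReal.ofReal t * sSup S ^ α + ENNReal.ofReal (1 - t) * sSup T ^ α :=
        add_le_add (mul_le_mul_right (iInf_rpow_le_neg hα S) _)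
          (mul_le_mul_right (iInf_rpow_le_neg hα T) _)

set_option maxHeartbeats 2000000 in
lemma key_step {n : ℕ} {α : ℝ} (hα : α < 0) {f : (Fin n → ℝ) → ℝ}
    (hf : AlphaConcave α f) (x₁ y₁ x₂ y₂ : Fin n → ℝ) {t : ℝ} (ht : t ∈ Set.Icc (0:ℝ) 1) :
    eMalpha α (ENNReal.ofReal (Malpha α (f x₁) (f (-y₁)) (1/2)))
      (ENNReal.ofReal (Malpha α (f x₂) (f (-y₂)) (1/2))) t ≤
    ENNReal.ofReal (Malpha α (f (t • x₁ + (1-t) • x₂)) (f (-(t • y₁ + (1-t) • y₂))) (1/2)) := by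
  obtain ⟨ht0, ht1⟩ := ht
  rcases eq_or_lt_of_le ht0 with rfl | ht0'
  · simp only [zero_smul, zero_add, sub_zero, one_smul]
    rw [eMalpha]
    norm_num
    rw [erpow_rpow_inv' hα.ne]
  rcases eq_or_lt_of_le ht1 with rfl | ht1'
  · simp only [one_smul, sub_self, zero_smul, add_zero]
    rw [eMalpha]
    norm_num
    rw [erpow_rpow_inv' hα.ne]
  have hα1 : (1 : ℝ) / α < 0 := one_div_neg.mpr hα
  by_cases h₁ : 0 < f x₁ ∧ 0 < f (-y₁)
  case neg =>
    have hz : Malpha α (f x₁) (f (-y₁)) (1/2) = 0 := by rw [Malpha, if_neg h₁]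
    rw [hz, eMalpha, ENNReal.ofReal_zero, ENNReal.zero_rpow_of_neg hα,
      ENNReal.mul_top (ENNReal.ofReal_pos.mpr ht0').ne', top_add,
      ENNReal.top_rpow_of_neg hα1]
    exact zero_le
  by_cases h₂ : 0 < f x₂ ∧ 0 < f (-y₂)
  case neg =>
    have hz : Malpha α (f x₂) (f (-y₂)) (1/2) = 0 := by rw [Malpha, if_neg h₂]
    rw [hz, eMalpha, ENNReal.ofReal_zero, ENNReal.zero_rpow_of_neg hα,
      ENNReal.mul_top (ENNReal.ofReal_pos.mpr (by linarith : (0:ℝ) < 1 - t)).ne',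
      add_top, ENNReal.top_rpow_of_neg hα1]
    exact zero_le
  -- main case
  have ha1 := Real.rpow_pos_of_pos h₁.1 α
  have hb1 := Real.rpow_pos_of_pos h₁.2 α
  have ha2 := Real.rpow_pos_of_pos h₂.1 α
  have hb2 := Real.rpow_pos_of_pos h₂.2 α
  have hu : Malpha α (f x₁) (f (-y₁)) (1/2)
      = (1/2 * f x₁ ^ α + (1 - 1/2) * f (-y₁) ^ α) ^ (1/α) := by rw [Malpha, if_pos h₁]
  have hv : Malpha α (f x₂) (f (-y₂)) (1/2)
      = (1/2 * f x₂ ^ α + (1 - 1/2) * f (-y₂) ^ α) ^ (1/α) := by rw [Malpha, if_pos h₂]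
  have hu0 : 0 < Malpha α (f x₁) (f (-y₁)) (1/2) := by
    rw [hu]; exact Real.rpow_pos_of_pos (by linarith) _
  have hv0 : 0 < Malpha α (f x₂) (f (-y₂)) (1/2) := by
    rw [hv]; exact Real.rpow_pos_of_pos (by linarith) _
  have huα := Real.rpow_pos_of_pos hu0 α
  have hvα := Real.rpow_pos_of_pos hv0 α
  -- u^α and v^α identities
  have hu' : Malpha α (f x₁) (f (-y₁)) (1/2) ^ α = 1/2 * f x₁ ^ α + (1 - 1/2) * f (-y₁) ^ α := by
    rw [hu, ← Real.rpow_mul (by linarith), one_div_mul_cancel hα.ne, Real.rpow_one]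
  have hv' : Malpha α (f x₂) (f (-y₂)) (1/2) ^ α = 1/2 * f x₂ ^ α + (1 - 1/2) * f (-y₂) ^ α := by
    rw [hv, ← Real.rpow_mul (by linarith), one_div_mul_cancel hα.ne, Real.rpow_one]
  -- α-concavity bounds
  have hAin : (0:ℝ) < t * f x₁ ^ α + (1 - t) * f x₂ ^ α := by nlinarith
  have hBin : (0:ℝ) < t * f (-y₁) ^ α + (1 - t) * f (-y₂) ^ α := by nlinarith
  have hApos : 0 < Malpha α (f x₁) (f x₂) t := by
    rw [Malpha, if_pos ⟨h₁.1, h₂.1⟩]; exact Real.rpow_pos_of_pos hAin _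
  have hBpos : 0 < Malpha α (f (-y₁)) (f (-y₂)) t := by
    rw [Malpha, if_pos ⟨h₁.2, h₂.2⟩]; exact Real.rpow_pos_of_pos hBin _
  have hA : Malpha α (f x₁) (f x₂) t ≤ f (t • x₁ + (1-t) • x₂) := hf x₁ x₂ t ⟨ht0, ht1⟩
  have hB : Malpha α (f (-y₁)) (f (-y₂)) t ≤ f (-(t • y₁ + (1-t) • y₂)) := by
    have h2 := hf (-y₁) (-y₂) t ⟨ht0, ht1⟩
    rwa [show t • (-y₁) + (1-t) • (-y₂) = -(t • y₁ + (1-t) • y₂) by rw [smul_neg, smul_neg, ← neg_add]] at h2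
  have h₃ : 0 < f (t • x₁ + (1-t) • x₂) ∧ 0 < f (-(t • y₁ + (1-t) • y₂)) :=
    ⟨lt_of_lt_of_le hApos hA, lt_of_lt_of_le hBpos hB⟩
  have hA' : f (t • x₁ + (1-t) • x₂) ^ α ≤ t * f x₁ ^ α + (1 - t) * f x₂ ^ α := by
    have h1 : f (t • x₁ + (1-t) • x₂) ^ α ≤ Malpha α (f x₁) (f x₂) t ^ α :=
      Real.rpow_le_rpow_of_nonpos hApos hA hα.le
    rwa [Malpha, if_pos ⟨h₁.1, h₂.1⟩, ← Real.rpow_mul hAin.le,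
      one_div_mul_cancel hα.ne, Real.rpow_one] at h1
  have hB' : f (-(t • y₁ + (1-t) • y₂)) ^ α ≤ t * f (-y₁) ^ α + (1 - t) * f (-y₂) ^ α := by
    have h1 : f (-(t • y₁ + (1-t) • y₂)) ^ α ≤ Malpha α (f (-y₁)) (f (-y₂)) t ^ α :=
      Real.rpow_le_rpow_of_nonpos hBpos hB hα.le
    rwa [Malpha, if_pos ⟨h₁.2, h₂.2⟩, ← Real.rpow_mul hBin.le,
      one_div_mul_cancel hα.ne, Real.rpow_one] at h1
  -- rewrite LHS into a single ofReal
  rw [eMalpha, ENNReal.ofReal_rpow_of_pos hu0, ENNReal.ofReal_rpow_of_pos hv0,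
    ← ENNReal.ofReal_mul ht0, ← ENNReal.ofReal_mul (by linarith : (0:ℝ) ≤ 1 - t),
    ← ENNReal.ofReal_add (by nlinarith) (by nlinarith),
    ENNReal.ofReal_rpow_of_pos (by nlinarith)]
  refine ENNReal.ofReal_le_ofReal ?_
  conv_rhs => rw [Malpha, if_pos h₃]
  refine Real.rpow_le_rpow_of_nonpos ?_ ?_ hα1.le
  · have := Real.rpow_pos_of_pos h₃.1 α
    have := Real.rpow_pos_of_pos h₃.2 α
    linarith
  · calc 1/2 * f (t • x₁ + (1-t) • x₂) ^ α + (1 - 1/2) * f (-(t • y₁ + (1-t) • y₂)) ^ α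
        ≤ 1/2 * (t * f x₁ ^ α + (1 - t) * f x₂ ^ α)
          + (1 - 1/2) * (t * f (-y₁) ^ α + (1 - t) * f (-y₂) ^ α) := by linarith
      _ = t * Malpha α (f x₁) (f (-y₁)) (1/2) ^ α
          + (1 - t) * Malpha α (f x₂) (f (-y₂)) (1/2) ^ α := by rw [hu', hv']; ring


set_option maxHeartbeats 2000000 in
/-- If `α < 0` and `f` is nonnegative and `α`-concave, then `Δ_α f` is
`α`-concave (as a `[0,∞]`-valued function). -/
theorem diffAlpha_alphaConcave {n : ℕ} (α : ℝ) (hα : α < 0)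
    (f : (Fin n → ℝ) → ℝ) (hf0 : ∀ x, 0 ≤ f x) (hf : AlphaConcave α f) :
    ∀ x y : Fin n → ℝ, ∀ t : ℝ, t ∈ Set.Icc (0 : ℝ) 1 →
      eMalpha α (diffAlpha α f x) (diffAlpha α f y) t ≤
        diffAlpha α f (t • x + (1 - t) • y) := by
  intro x y t ht
  have hne : ∀ w : Fin n → ℝ,
      {r : ℝ≥0∞ | ∃ x y : Fin n → ℝ, (1 / 2 : ℝ) • (x + y) = w ∧
        r = ENNReal.ofReal (Malpha α (f x) (f (-y)) (1 / 2))}.Nonempty := fun w =>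
    ⟨_, w, w, by rw [← two_smul ℝ w, smul_smul]; norm_num, rfl⟩
  refine eMalpha_sSup_le hα (hne x) (hne y) ?_
  rintro a ⟨x₁, y₁, hxy₁, rfl⟩ b ⟨x₂, y₂, hxy₂, rfl⟩
  refine le_trans (key_step hα hf x₁ y₁ x₂ y₂ ht) (le_sSup ?_)
  exact ⟨t • x₁ + (1 - t) • x₂, t • y₁ + (1 - t) • y₂,
    by rw [← hxy₁, ← hxy₂]; module, rfl⟩
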